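/- Let P(z) = ∑_{j=0}^m a_j z^{m-j} be a polynomial with complex coefficients, p a prime, and s a positive integer with (p-1)s ≤ m. Then Φ_p(z^s) divides P(z) if and only if for every h ∈ {0, 1, ..., ps-1}, ∑_{j ≡ h (mod ps)} a_j = ∑_{j ≡ h-s (mod ps)} a_j. -/

import Mathlib

open Polynomial Finset

lemma dvd_X_pow_sub_one_iff_classsum (n : ℕ) (hn : 0 < n) (T : Finset ℕ) (f : ℕ → ℂ) :
    ((X ^ n - 1 : ℂ[X]) ∣ ∑ k ∈ T, C (f k) * X ^ k) ↔
      ∀ e < n, ∑ k ∈ T.filter (fun k => k % n = e), f k = 0 := by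
  set Q : ℂ[X] := ∑ k ∈ T, C (f k) * X ^ k with hQ
  set c : ℕ → ℂ := fun e => ∑ k ∈ T.filter (fun k => k % n = e), f k with hc
  set R : ℂ[X] := ∑ e ∈ range n, C (c e) * X ^ e with hR
  have hRalt : R = ∑ k ∈ T, C (f k) * X ^ (k % n) := by
    rw [hR, ← Finset.sum_fiberwise_of_maps_to
      (g := fun k => k % n) (t := range n)
      (fun k _ => Finset.mem_range.mpr (Nat.mod_lt k hn))
      (fun k => C (f k) * X ^ (k % n))]
    refine Finset.sum_congr rfl fun e he => ?_
    rw [hc, map_sum, Finset.sum_mul]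
    refine Finset.sum_congr rfl fun k hk => ?_
    rw [(Finset.mem_filter.mp hk).2]
  have hdvdQR : (X ^ n - 1 : ℂ[X]) ∣ Q - R := by
    rw [hQ, hRalt, ← Finset.sum_sub_distrib]
    apply Finset.dvd_sum
    intro k _
    rw [← mul_sub]
    apply Dvd.dvd.mul_left
    have h1 : (X : ℂ[X]) ^ k - X ^ (k % n) = X ^ (k % n) * ((X ^ n) ^ (k / n) - 1) := by
      rw [mul_sub, mul_one, ← pow_mul, ← pow_add, Nat.mod_add_div k n]
    rw [h1]
    exact Dvd.dvd.mul_left (by simpa using sub_dvd_pow_sub_pow ((X : ℂ[X]) ^ n) 1 (k / n)) _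
  have hdegR : R.degree < (X ^ n - 1 : ℂ[X]).degree := by
    have h2 : (X ^ n - 1 : ℂ[X]).degree = n := by
      simpa using degree_X_pow_sub_C hn (1 : ℂ)
    rw [h2, hR]
    apply lt_of_le_of_lt (degree_sum_le _ _)
    rw [Finset.sup_lt_iff (by exact_mod_cast WithBot.bot_lt_coe n)]
    intro e he
    exact lt_of_le_of_lt (degree_C_mul_X_pow_le _ _)
      (by exact_mod_cast Finset.mem_range.mp he)
  have hRcoeff : ∀ e, e < n → R.coeff e = c e := by
    intro e he
    rw [hR, finset_sum_coeff]
    simp only [coeff_C_mul, coeff_X_pow, mul_ite, mul_one, mul_zero]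
    rw [Finset.sum_ite_eq (range n) e c, if_pos (Finset.mem_range.mpr he)]
  constructor
  · intro h e he
    have h2 : (X ^ n - 1 : ℂ[X]) ∣ R := by
      have h3 := dvd_sub h hdvdQR
      have h4 : Q - (Q - R) = R := by ring
      rwa [h4] at h3
    have h5 : R = 0 := eq_zero_of_dvd_of_degree_lt h2 hdegR
    have h6 := hRcoeff e he
    rw [h5] at h6
    simpa using h6.symm
  · intro h
    have hR0 : R = 0 := by
      rw [hR]
      apply Finset.sum_eq_zero
      intro e he
      have hce : c e = 0 := h e (Finset.mem_range.mp he)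
      rw [hce, map_zero, zero_mul]
    have h7 := hdvdQR
    rwa [hR0, sub_zero] at h7

lemma classum (m n c e L : ℕ) (a : ℕ → ℂ) (hn : 0 < n) (he : e < n) (hc : m ≤ c) (hL : c < L) :
    ∑ k ∈ (range L).filter (fun k => k % n = e),
        (if k ∈ Finset.Icc (c - m) c then a (c - k) else 0) =
      ∑ j ∈ (range (m + 1)).filter
          (fun (j : ℕ) => (j : ℤ) ≡ (c : ℤ) - (e : ℤ) [ZMOD (n : ℤ)]), a j := by
  rw [Finset.sum_ite_mem]
  have hemod : ((e : ℤ)) % (n : ℤ) = e := Int.emod_eq_of_lt (by positivity) (by exact_mod_cast he)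
  apply Finset.sum_nbij' (i := fun k => c - k) (j := fun j => c - j)
  · intro k hk
    simp only [Finset.mem_inter, Finset.mem_filter, Finset.mem_range, Finset.mem_Icc] at hk
    obtain ⟨⟨hk1, hk2⟩, hk3, hk4⟩ := hk
    simp only [Finset.mem_filter, Finset.mem_range]
    refine ⟨by omega, ?_⟩
    have hk' : (k : ℤ) ≡ (e : ℤ) [ZMOD (n : ℤ)] := by
      show (k : ℤ) % n = (e : ℤ) % n
      rw [hemod]
      have h6 : ((k % n : ℕ) : ℤ) = (k : ℤ) % n := by push_cast; rfl
      rw [← h6, hk2]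
    have hcast : ((c - k : ℕ) : ℤ) = (c : ℤ) - k := by omega
    rw [hcast]
    exact (Int.ModEq.refl (c : ℤ)).sub hk'
  · intro j hj
    simp only [Finset.mem_filter, Finset.mem_range] at hj
    obtain ⟨hj1, hj2⟩ := hj
    simp only [Finset.mem_inter, Finset.mem_filter, Finset.mem_range, Finset.mem_Icc]
    have hmod : ((c - j : ℕ) : ℤ) % (n : ℤ) = e := by
      have h3 : ((c - j : ℕ) : ℤ) = (c : ℤ) - j := by omega
      have h4 : ((c : ℤ) - j) ≡ ((c : ℤ) - ((c : ℤ) - e)) [ZMOD (n : ℤ)] :=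
        (Int.ModEq.refl (c : ℤ)).sub hj2
      rw [h3]
      calc ((c : ℤ) - j) % n = ((c : ℤ) - ((c : ℤ) - e)) % n := h4
        _ = (e : ℤ) % n := by ring_nf
        _ = e := hemod
    refine ⟨⟨by omega, ?_⟩, by omega, by omega⟩
    have h5 : (((c - j) % n : ℕ) : ℤ) = ((c - j : ℕ) : ℤ) % (n : ℤ) := by push_cast; rfl
    rw [hmod] at h5
    exact_mod_cast h5
  · intro k hk
    simp only [Finset.mem_inter, Finset.mem_filter, Finset.mem_range, Finset.mem_Icc] at hk
    omega
  · intro j hj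
    simp only [Finset.mem_filter, Finset.mem_range] at hj
    omega
  · intro k hk
    simp only [Finset.mem_inter, Finset.mem_filter, Finset.mem_range, Finset.mem_Icc] at hk
    rfl

theorem divisibility_by_phi_p_zs (m s : ℕ) (p : ℕ) (hp : p.Prime) (a : ℕ → ℂ)
    (hs : 1 ≤ s) (hm : (p - 1) * s ≤ m) :
    ((Polynomial.cyclotomic p ℂ).comp (X ^ s) ∣
        ∑ j ∈ Finset.range (m + 1), C (a j) * X ^ (m - j)) ↔
      ∀ h < p * s,
        ∑ j ∈ (Finset.range (m + 1)).filter (fun (j : ℕ) => (j : ℤ) ≡ (h : ℤ) [ZMOD (p * s)]),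
            a j =
          ∑ j ∈ (Finset.range (m + 1)).filter
              (fun (j : ℕ) => (j : ℤ) ≡ (h : ℤ) - (s : ℤ) [ZMOD (p * s)]), a j := by
  haveI := Fact.mk hp
  have hps0 : 0 < p * s := Nat.mul_pos hp.pos hs
  set n : ℕ := p * s with hn
  have hps : 0 < n := hps0
  have hcastn : ((n : ℕ) : ℤ) = (p : ℤ) * s := by rw [hn]; push_cast; ring
  set P : ℂ[X] := ∑ j ∈ Finset.range (m + 1), C (a j) * X ^ (m - j) with hP
  set B : ℤ → ℂ := fun t =>
    ∑ j ∈ (Finset.range (m + 1)).filter (fun (j : ℕ) => (j : ℤ) ≡ t [ZMOD ((p : ℤ) * s)]), a j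
    with hBdef
  set f : ℕ → ℂ := fun k =>
    (if k ∈ Finset.Icc s (m + s) then a (m + s - k) else 0) -
    (if k ≤ m then a (m - k) else 0) with hf
  -- Step 1 : key identity
  have hcomp : (cyclotomic p ℂ).comp (X ^ s) * ((X : ℂ[X]) ^ s - 1) = X ^ n - 1 := by
    rw [hn, cyclotomic_prime, Polynomial.comp, eval₂_finset_sum]
    simp only [eval₂_X_pow]
    rw [geom_sum_mul, ← pow_mul, mul_comm s p]
  -- Step 2 : divisibility transfer
  have hdvd_iff : ((cyclotomic p ℂ).comp (X ^ s) ∣ P) ↔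
      ((X ^ n - 1 : ℂ[X]) ∣ ((X : ℂ[X]) ^ s - 1) * P) := by
    have hne : ((X : ℂ[X]) ^ s - 1) ≠ 0 := by
      intro h
      have h2 := congrArg (eval 0) h
      simp [zero_pow (by omega : s ≠ 0)] at h2
    constructor
    · rintro ⟨R, hR⟩
      exact ⟨R, by rw [← hcomp, hR]; ring⟩
    · intro hdv
      rw [← hcomp, mul_comm ((cyclotomic p ℂ).comp (X ^ s)) ((X : ℂ[X]) ^ s - 1)] at hdv
      exact (mul_dvd_mul_iff_left hne).mp hdv
  -- Step 3 : single sum form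
  have hQsum : ((X : ℂ[X]) ^ s - 1) * P = ∑ k ∈ range (m + s + 1), C (f k) * X ^ k := by
    rw [hP, hf]
    have hrhs : ∀ k : ℕ, C ((if k ∈ Finset.Icc s (m + s) then a (m + s - k) else 0) -
          (if k ≤ m then a (m - k) else 0)) * X ^ k =
        (if k ∈ Finset.Icc s (m + s) then C (a (m + s - k)) * X ^ k else 0) -
        (if k ≤ m then C (a (m - k)) * X ^ k else 0) := by
      intro k
      rw [map_sub, sub_mul]
      congr 1 <;> split <;> simp
    simp only [hrhs]
    rw [Finset.sum_sub_distrib]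
    have h1 : ∑ k ∈ range (m + s + 1),
          (if k ∈ Finset.Icc s (m + s) then C (a (m + s - k)) * X ^ k else 0)
        = ∑ k ∈ Finset.Icc s (m + s), C (a (m + s - k)) * X ^ k := by
      rw [Finset.sum_ite_mem]
      congr 1
      rw [Finset.inter_eq_right]
      intro k hk
      simp only [Finset.mem_Icc] at hk
      simp only [Finset.mem_range]
      omega
    have h2 : ∑ k ∈ range (m + s + 1), (if k ≤ m then C (a (m - k)) * X ^ k else 0)
        = ∑ k ∈ range (m + 1), C (a (m - k)) * X ^ k := by
      rw [← Finset.sum_filter]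
      congr 1
      ext k
      simp only [Finset.mem_filter, Finset.mem_range]
      omega
    rw [h1, h2]
    have hpart1 : (X : ℂ[X]) ^ s * (∑ j ∈ Finset.range (m + 1), C (a j) * X ^ (m - j))
        = ∑ k ∈ Finset.Icc s (m + s), C (a (m + s - k)) * X ^ k := by
      rw [Finset.mul_sum]
      apply Finset.sum_nbij' (i := fun j => m + s - j) (j := fun k => m + s - k)
      · intro j hj
        simp only [Finset.mem_range] at hj
        simp only [Finset.mem_Icc]
        omega
      · intro k hk
        simp only [Finset.mem_Icc] at hk
        simp only [Finset.mem_range]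
        omega
      · intro j hj; simp only [Finset.mem_range] at hj; omega
      · intro k hk; simp only [Finset.mem_Icc] at hk; omega
      · intro j hj
        simp only [Finset.mem_range] at hj
        rw [show m + s - (m + s - j) = j by omega, show m + s - j = s + (m - j) by omega,
          pow_add]
        ring
    have hpart0 : (∑ j ∈ Finset.range (m + 1), C (a j) * X ^ (m - j) : ℂ[X])
        = ∑ k ∈ range (m + 1), C (a (m - k)) * X ^ k := by
      apply Finset.sum_nbij' (i := fun j => m - j) (j := fun k => m - k)
      · intro j hj; simp only [Finset.mem_range] at *; omega
      · intro k hk; simp only [Finset.mem_range] at *; omega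
      · intro j hj; simp only [Finset.mem_range] at hj; omega
      · intro k hk; simp only [Finset.mem_range] at hk; omega
      · intro j hj
        simp only [Finset.mem_range] at hj
        rw [show m - (m - j) = j by omega]
    rw [sub_mul, one_mul, hpart1, hpart0]
  -- Step 4 : class sums
  have hB1 : ∀ e : ℕ, e < n →
      ∑ k ∈ (range (m + s + 1)).filter (fun k => k % n = e),
        (if k ∈ Finset.Icc s (m + s) then a (m + s - k) else 0) =
      B ((m : ℤ) + s - e) := by
    intro e he
    have h0 := classum m n (m + s) e (m + s + 1) a hps he (by omega) (by omega)
    rw [show m + s - m = s from by omega] at h0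
    rw [h0]
    simp only [hcastn, Nat.cast_add]
    rfl
  have hB2 : ∀ e : ℕ, e < n →
      ∑ k ∈ (range (m + s + 1)).filter (fun k => k % n = e),
        (if k ≤ m then a (m - k) else 0) =
      B ((m : ℤ) - e) := by
    intro e he
    have h0 := classum m n m e (m + s + 1) a hps he le_rfl (by omega)
    rw [show m - m = 0 from by omega] at h0
    simp only [Finset.mem_Icc, Nat.zero_le, true_and] at h0
    rw [h0]
    simp only [hcastn]
    rfl
  have hBcong : ∀ t t' : ℤ, t ≡ t' [ZMOD ((p : ℤ) * s)] → B t = B t' := by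
    intro t t' htt
    apply Finset.sum_congr _ (fun _ _ => rfl)
    apply Finset.filter_congr
    intro j _
    exact ⟨fun hj => hj.trans htt, fun hj => hj.trans htt.symm⟩
  have hmem : ∀ t : ℤ, (t % (n : ℤ)).toNat < n ∧
      (((t % (n : ℤ)).toNat : ℤ)) ≡ t [ZMOD ((p : ℤ) * s)] := by
    intro t
    have h0 : (0 : ℤ) < ((n : ℕ) : ℤ) := by exact_mod_cast hps
    constructor
    · have h1 := Int.emod_lt_of_pos t h0
      have h2 := Int.emod_nonneg t (ne_of_gt h0)
      omega
    · have h2 := Int.emod_nonneg t (ne_of_gt h0)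
      rw [Int.toNat_of_nonneg h2]
      show (t % (n : ℤ)) % ((p : ℤ) * s) = t % ((p : ℤ) * s)
      rw [← hcastn]
      exact Int.emod_emod_of_dvd t dvd_rfl
  rw [hdvd_iff, hQsum, dvd_X_pow_sub_one_iff_classsum n hps]
  have hiff : ∀ e : ℕ, e < n →
      ((∑ k ∈ (range (m + s + 1)).filter (fun k => k % n = e), f k = 0) ↔
      (B ((m : ℤ) + s - e) = B ((m : ℤ) - e))) := by
    intro e he
    simp only [hf]
    rw [Finset.sum_sub_distrib, hB1 e he, hB2 e he, sub_eq_zero]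
  constructor
  · intro H h hh
    have key : ∀ e, e < n → B ((m : ℤ) + s - e) = B ((m : ℤ) - e) :=
      fun e he => (hiff e he).mp (H e he)
    show B (h : ℤ) = B ((h : ℤ) - s)
    set e : ℕ := (((m : ℤ) + s - h) % (n : ℤ)).toNat with he
    obtain ⟨he1, he2⟩ := hmem ((m : ℤ) + s - h)
    have h1 : B ((m : ℤ) + s - e) = B (h : ℤ) := by
      apply hBcong
      have h3 := (Int.ModEq.refl ((m : ℤ) + s)).sub he2
      rwa [show ((m : ℤ) + s) - ((m : ℤ) + s - h) = (h : ℤ) by ring] at h3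
    have h2 : B ((m : ℤ) - e) = B ((h : ℤ) - s) := by
      apply hBcong
      have h3 := (Int.ModEq.refl ((m : ℤ))).sub he2
      rwa [show ((m : ℤ)) - ((m : ℤ) + s - h) = (h : ℤ) - s by ring] at h3
    calc B (h : ℤ) = B ((m : ℤ) + s - e) := h1.symm
      _ = B ((m : ℤ) - e) := key e he1
      _ = B ((h : ℤ) - s) := h2
  · intro H e he
    rw [hiff e he]
    have H' : ∀ h : ℕ, h < n → B (h : ℤ) = B ((h : ℤ) - s) := fun h hh => H h hh
    set h : ℕ := (((m : ℤ) + s - e) % (n : ℤ)).toNat with hh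
    obtain ⟨hh1, hh2⟩ := hmem ((m : ℤ) + s - e)
    have h1 : B ((m : ℤ) + s - e) = B (h : ℤ) := (hBcong _ _ hh2).symm
    have h2 : B ((h : ℤ) - s) = B ((m : ℤ) - e) := by
      apply hBcong
      have h3 := hh2.sub (Int.ModEq.refl (s : ℤ))
      rwa [show ((m : ℤ) + s - e) - s = (m : ℤ) - e by ring] at h3
    calc B ((m : ℤ) + s - e) = B (h : ℤ) := h1
      _ = B ((h : ℤ) - s) := H' h hh1
      _ = B ((m : ℤ) - e) := h2
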